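/- Let G = (B,ψ,A) be a quantum graph with δ-form ψ where A = α is a *-automorphism of B. Then the quantum edge correspondence E_α = B·ε_α·B is isomorphic, as a C*-correspondence over B, to B_α, which is B with inner product ⟨a,b⟩ = a*b, right action by multiplication, and left action x·η := α(x)η; the isomorphism sends (1/δ)·1 to ε_α. -/

import Mathlib

open scoped TensorProduct
open TensorProduct

noncomputable section


open scoped TensorProduct
open TensorProduct

noncomputable section

variable {B : Type*} [Ring B] [StarRing B] [Algebra ℂ B] [StarModule ℂ B]
  [Module.Finite ℂ B] [Module.Free ℂ B]

/-- The multiplication map `m : B ⊗ B → B`. -/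
abbrev mulMap (B : Type*) [Ring B] [Algebra ℂ B] : B ⊗[ℂ] B →ₗ[ℂ] B := LinearMap.mul' ℂ B

/-- `ψ ⊗ ψ` as a functional on `B ⊗ B`. -/
def psi2 (ψ : B →ₗ[ℂ] ℂ) : B ⊗[ℂ] B →ₗ[ℂ] ℂ :=
  (TensorProduct.lid ℂ ℂ).toLinearMap ∘ₗ TensorProduct.map ψ ψ

/-- `ψ ⊗ id : B ⊗ B → B`. -/
def psiOne (ψ : B →ₗ[ℂ] ℂ) : B ⊗[ℂ] B →ₗ[ℂ] B :=
  (TensorProduct.lid ℂ B).toLinearMap ∘ₗ TensorProduct.map ψ LinearMap.id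

/-- `ψ` is a faithful state. -/
def IsState (ψ : B →ₗ[ℂ] ℂ) : Prop :=
  ψ 1 = 1 ∧ (∀ x : B, 0 ≤ (ψ (star x * x)).re ∧ (ψ (star x * x)).im = 0) ∧
    ∀ x : B, ψ (star x * x) = 0 → x = 0

/-- `mstar` is the adjoint of multiplication w.r.t. the GNS inner products of `ψ`:
`⟪y ⊗ z, m*(x)⟫_{ψ⊗ψ} = ⟪y * z, x⟫_ψ`. -/
def IsAdjointMul (ψ : B →ₗ[ℂ] ℂ) (mstar : B →ₗ[ℂ] B ⊗[ℂ] B) : Prop :=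
  ∀ x y z : B, psi2 ψ ((star y ⊗ₜ[ℂ] star z) * mstar x) = ψ (star (y * z) * x)

/-- `ψ` is a `δ`-form: `m m* = δ² id`. -/
def IsDeltaForm (mstar : B →ₗ[ℂ] B ⊗[ℂ] B) (δ : ℝ) : Prop :=
  ∀ x : B, mulMap B (mstar x) = ((δ : ℂ)^2) • x

/-- `A` is a quantum adjacency matrix: `m (A ⊗ A) m* = δ² A`. -/
def IsQAdj (mstar : B →ₗ[ℂ] B ⊗[ℂ] B) (δ : ℝ) (A : B →ₗ[ℂ] B) : Prop :=
  ∀ x : B, mulMap B (TensorProduct.map A A (mstar x)) = ((δ : ℂ)^2) • A x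

/-- The quantum edge indicator `ε = (1/δ²)(1 ⊗ A) m*(1)`. -/
def edgeInd (mstar : B →ₗ[ℂ] B ⊗[ℂ] B) (δ : ℝ) (A : B →ₗ[ℂ] B) : B ⊗[ℂ] B :=
  (((δ : ℂ)^2)⁻¹) • (LinearMap.lTensor B A) (mstar 1)

/-- The `#`-multiplication on `B ⊗ B`: `(a⊗b)#(c⊗d) = (ac)⊗(db)` (i.e. `B ⊗ Bᵒᵖ`). -/
def hashMul (ξ η : B ⊗[ℂ] B) : B ⊗[ℂ] B :=
  (TensorProduct.congr (LinearEquiv.refl ℂ B) (MulOpposite.opLinearEquiv ℂ (M := B))).symm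
    ((TensorProduct.congr (LinearEquiv.refl ℂ B) (MulOpposite.opLinearEquiv ℂ (M := B))) ξ *
      (TensorProduct.congr (LinearEquiv.refl ℂ B) (MulOpposite.opLinearEquiv ℂ (M := B))) η)

/-- The (conjugate-linear) star operation on `B ⊗ B`, `star (a ⊗ b) = star a ⊗ star b`,
defined via a choice of basis. -/
def starT (ξ : B ⊗[ℂ] B) : B ⊗[ℂ] B :=
  ∑ p : Module.Free.ChooseBasisIndex ℂ B × Module.Free.ChooseBasisIndex ℂ B,
    (starRingEnd ℂ)
      (((Module.Free.chooseBasis ℂ B).tensorProduct (Module.Free.chooseBasis ℂ B)).repr ξ p) •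
      (star ((Module.Free.chooseBasis ℂ B) p.1) ⊗ₜ[ℂ] star ((Module.Free.chooseBasis ℂ B) p.2))

/-- The `B`-valued inner product on `B ⊗ B`: `⟨a⊗b, c⊗d⟩_B = ψ(a*c) b* d`. -/
def bip (ψ : B →ₗ[ℂ] ℂ) (ξ η : B ⊗[ℂ] B) : B := psiOne ψ (starT ξ * η)

/-- Positivity in a star ring. -/
def IsPosEl {R : Type*} [Ring R] [StarRing R] (x : R) : Prop := ∃ y, x = star y * y

/-- Complete positivity of a linear map on `B`. -/
def IsCP (A : B →ₗ[ℂ] B) : Prop :=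
  ∀ (n : ℕ) (M : Matrix (Fin n) (Fin n) B), IsPosEl M → IsPosEl (M.map A)

/-- The map `A_ξ : x ↦ δ² (ψ ⊗ 1)(x · ξ)`. -/
def Axi (ψ : B →ₗ[ℂ] ℂ) (δ : ℝ) (ξ : B ⊗[ℂ] B) : B →ₗ[ℂ] B :=
  ((δ : ℂ)^2) • ((psiOne ψ) ∘ₗ ((LinearMap.mul ℂ (B ⊗[ℂ] B)).flip ξ) ∘ₗ
    (Algebra.TensorProduct.includeLeft : B →ₐ[ℂ] B ⊗[ℂ] B).toLinearMap)

/-- The quantum edge correspondence `E_G = B · ε_G · B` as a subspace of `B ⊗ B`. -/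
def EGspan (mstar : B →ₗ[ℂ] B ⊗[ℂ] B) (δ : ℝ) (A : B →ₗ[ℂ] B) : Submodule ℂ (B ⊗[ℂ] B) :=
  Submodule.span ℂ
    {z : B ⊗[ℂ] B | ∃ x y : B, z = (x ⊗ₜ[ℂ] (1 : B)) * edgeInd mstar δ A * ((1 : B) ⊗ₜ[ℂ] y)}


section AuxLemmas

set_option linter.unusedSectionVars false

variable (ψ : B →ₗ[ℂ] ℂ) (mstar : B →ₗ[ℂ] B ⊗[ℂ] B)

lemma psiOne_tmul (u v : B) : psiOne ψ (u ⊗ₜ[ℂ] v) = ψ u • v := by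
  simp [psiOne]

lemma psi2_tmul (u v : B) : psi2 ψ (u ⊗ₜ[ℂ] v) = ψ u * ψ v := by
  simp [psi2]

example (ψ : B →ₗ[ℂ] ℂ) (a b : B) : psi2 ψ (a ⊗ₜ[ℂ] b) = ψ a * ψ b := by
  simp only [psi2_tmul]

lemma psi_psiOne (ζ : B ⊗[ℂ] B) : ψ (psiOne ψ ζ) = psi2 ψ ζ := by
  induction ζ using TensorProduct.induction_on with
  | zero => simp
  | tmul u v => simp [psiOne_tmul, psi2_tmul]
  | add x y hx hy => simp [map_add, hx, hy]

lemma psiOne_one_tmul_mul (c : B) (ζ : B ⊗[ℂ] B) :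
    psiOne ψ (((1 : B) ⊗ₜ[ℂ] c) * ζ) = c * psiOne ψ ζ := by
  induction ζ using TensorProduct.induction_on with
  | zero => simp
  | tmul u v => simp [Algebra.TensorProduct.tmul_mul_tmul, psiOne_tmul, mul_smul_comm]
  | add x y hx hy => simp only [mul_add, map_add, hx, hy]

lemma psiOne_mul_one_tmul (c : B) (ζ : B ⊗[ℂ] B) :
    psiOne ψ (ζ * ((1 : B) ⊗ₜ[ℂ] c)) = psiOne ψ ζ * c := by
  induction ζ using TensorProduct.induction_on with
  | zero => simp
  | tmul u v => simp [Algebra.TensorProduct.tmul_mul_tmul, psiOne_tmul, smul_mul_assoc]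
  | add x y hx hy => simp only [add_mul, map_add, hx, hy]

lemma mulMap_tmul (u v : B) : mulMap B (u ⊗ₜ[ℂ] v) = u * v := rfl

lemma mulMap_mul_one_tmul (c : B) (ζ : B ⊗[ℂ] B) :
    mulMap B (ζ * ((1 : B) ⊗ₜ[ℂ] c)) = mulMap B ζ * c := by
  induction ζ using TensorProduct.induction_on with
  | zero => simp
  | tmul u v => simp [Algebra.TensorProduct.tmul_mul_tmul, mulMap_tmul, mul_assoc]
  | add x y hx hy => simp only [add_mul, map_add, hx, hy]

lemma mulMap_tmul_one_mul (c : B) (ζ : B ⊗[ℂ] B) :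
    mulMap B ((c ⊗ₜ[ℂ] (1 : B)) * ζ) = c * mulMap B ζ := by
  induction ζ using TensorProduct.induction_on with
  | zero => simp
  | tmul u v => simp [Algebra.TensorProduct.tmul_mul_tmul, mulMap_tmul, mul_assoc]
  | add x y hx hy => simp only [mul_add, map_add, hx, hy]

lemma starT_zero : starT (0 : B ⊗[ℂ] B) = 0 := by
  simp [starT]

lemma starT_add (ξ η : B ⊗[ℂ] B) : starT (ξ + η) = starT ξ + starT η := by
  unfold starT
  rw [← Finset.sum_add_distrib]
  exact Finset.sum_congr rfl fun p _ => by rw [map_add, Finsupp.add_apply, map_add, add_smul]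

lemma starT_smul (c : ℂ) (ξ : B ⊗[ℂ] B) :
    starT (c • ξ) = (starRingEnd ℂ) c • starT ξ := by
  unfold starT
  rw [Finset.smul_sum]
  exact Finset.sum_congr rfl fun p _ => by
    rw [map_smul, Finsupp.smul_apply, smul_eq_mul, map_mul, mul_smul]

lemma star_eq_sum (x : B) :
    star x = ∑ i, (starRingEnd ℂ) ((Module.Free.chooseBasis ℂ B).repr x i) •
      star ((Module.Free.chooseBasis ℂ B) i) := by
  conv_lhs => rw [← Module.Basis.sum_repr (Module.Free.chooseBasis ℂ B) x]
  rw [star_sum]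
  exact Finset.sum_congr rfl fun i _ => by rw [star_smul, starRingEnd_apply]

lemma starT_tmul (a b : B) : starT (a ⊗ₜ[ℂ] b) = star a ⊗ₜ[ℂ] star b := by
  classical
  rw [star_eq_sum a, star_eq_sum b, sum_tmul]
  unfold starT
  rw [Fintype.sum_prod_type]
  refine Finset.sum_congr rfl fun i _ => ?_
  rw [tmul_sum]
  refine Finset.sum_congr rfl fun j _ => ?_
  simp only [Module.Basis.tensorProduct_repr_tmul_apply, smul_eq_mul, map_mul, tmul_smul, ← smul_tmul',
    smul_smul]

lemma starT_starT (ξ : B ⊗[ℂ] B) : starT (starT ξ) = ξ := by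
  induction ξ using TensorProduct.induction_on with
  | zero => simp [starT_zero]
  | tmul u v => rw [starT_tmul, starT_tmul, star_star, star_star]
  | add x y hx hy => rw [starT_add, starT_add, hx, hy]

lemma starT_mul_one_tmul (c : B) (ξ : B ⊗[ℂ] B) :
    starT (ξ * ((1 : B) ⊗ₜ[ℂ] c)) = ((1 : B) ⊗ₜ[ℂ] star c) * starT ξ := by
  induction ξ using TensorProduct.induction_on with
  | zero => simp [starT_zero]
  | tmul u v =>
      rw [Algebra.TensorProduct.tmul_mul_tmul, starT_tmul, starT_tmul,
        Algebra.TensorProduct.tmul_mul_tmul, mul_one, one_mul, star_mul]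
  | add x y hx hy => rw [add_mul, starT_add, hx, hy, starT_add, mul_add]

lemma starT_tmul_one_mul (c : B) (ξ : B ⊗[ℂ] B) :
    starT ((c ⊗ₜ[ℂ] (1 : B)) * ξ) = starT ξ * (star c ⊗ₜ[ℂ] (1 : B)) := by
  induction ξ using TensorProduct.induction_on with
  | zero => simp [starT_zero]
  | tmul u v =>
      rw [Algebra.TensorProduct.tmul_mul_tmul, starT_tmul, starT_tmul,
        Algebra.TensorProduct.tmul_mul_tmul, mul_one, one_mul, star_mul]
  | add x y hx hy => rw [mul_add, starT_add, hx, hy, starT_add, add_mul]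

lemma sep_left (hψ : IsState ψ) {d : B} (h : ∀ c : B, ψ (star c * d) = 0) : d = 0 :=
  hψ.2.2 d (h d)

lemma sep_left' (hψ : IsState ψ) {d : B} (h : ∀ b : B, ψ (b * d) = 0) : d = 0 :=
  hψ.2.2 d (h (star d))

lemma sep_right (hψ : IsState ψ) {c : B} (h : ∀ x : B, ψ (c * x) = 0) : c = 0 := by
  have h2 : ψ (star (star c) * star c) = 0 := by rw [star_star]; exact h (star c)
  have := hψ.2.2 (star c) h2
  simpa using congrArg star this

lemma hadj_ext (hadj : IsAdjointMul ψ mstar) (ζ : B ⊗[ℂ] B) (x : B) :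
    psi2 ψ (starT ζ * mstar x) = ψ (star (mulMap B ζ) * x) := by
  induction ζ using TensorProduct.induction_on with
  | zero => simp [starT_zero]
  | tmul y z =>
      rw [starT_tmul, mulMap_tmul]
      exact hadj x y z
  | add u v hu hv => rw [starT_add, add_mul, map_add, hu, hv, map_add, star_add, add_mul, map_add]

lemma psi_star_psiOne (c : B) (ζ : B ⊗[ℂ] B) :
    ψ (star c * psiOne ψ ζ) = psi2 ψ (((1 : B) ⊗ₜ[ℂ] star c) * ζ) := by
  rw [← psi_psiOne, psiOne_one_tmul_mul]

/-- `B`-valued adjointness of `mstar`. -/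
lemma bip_mstar (hψ : IsState ψ) (hadj : IsAdjointMul ψ mstar) (ξ : B ⊗[ℂ] B) (x : B) :
    psiOne ψ (starT ξ * mstar x) = star (mulMap B ξ) * x := by
  have key : ∀ c : B, ψ (star c * (psiOne ψ (starT ξ * mstar x) - star (mulMap B ξ) * x)) = 0 := by
    intro c
    rw [mul_sub, map_sub, psi_star_psiOne, ← mul_assoc, ← starT_mul_one_tmul,
      hadj_ext ψ mstar hadj, mulMap_mul_one_tmul, star_mul, mul_assoc]
    exact sub_self _
  have := sep_left ψ hψ key
  exact sub_eq_zero.mp this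

/-- The map `c ↦ ψ (c * ·)` is bijective. -/
lemma mul_psi_bij (hψ : IsState ψ) :
    Function.Surjective ((LinearMap.mul ℂ B).compr₂ ψ) := by
  have hinj : Function.Injective ((LinearMap.mul ℂ B).compr₂ ψ) := by
    rw [← LinearMap.ker_eq_bot, LinearMap.ker_eq_bot']
    intro c hc
    refine sep_right ψ hψ fun x => ?_
    have := congrFun (congrArg DFunLike.coe hc) x
    simpa using this
  have hrank : Module.finrank ℂ B = Module.finrank ℂ (Module.Dual ℂ B) :=
    (Subspace.dual_finrank_eq).symm
  exact (LinearMap.injective_iff_surjective_of_finrank_eq_finrank hrank).mp hinj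

/-- Nondegeneracy of `psi2` pairing. -/
lemma psi2_sep (hψ : IsState ψ) (η : B ⊗[ℂ] B)
    (h : ∀ ζ : B ⊗[ℂ] B, psi2 ψ (ζ * η) = 0) : η = 0 := by
  classical
  set e := Module.Free.chooseBasis ℂ B with he
  choose f hf using fun j => mul_psi_bij ψ hψ (e.coord j)
  have hfe : ∀ j x, ψ (f j * x) = e.repr x j := by
    intro j x
    have := congrFun (congrArg DFunLike.coe (hf j)) x
    simpa [Module.Basis.coord_apply] using this
  have hrep : ∀ p : Module.Free.ChooseBasisIndex ℂ B × Module.Free.ChooseBasisIndex ℂ B,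
      (e.tensorProduct e).repr η p = 0 := by
    intro p
    have h0 := h (f p.1 ⊗ₜ[ℂ] f p.2)
    rw [← Module.Basis.sum_repr (e.tensorProduct e) η] at h0
    rw [Finset.mul_sum] at h0
    simpa [map_sum, mul_smul_comm, map_smul, Module.Basis.tensorProduct_apply',
      Algebra.TensorProduct.tmul_mul_tmul, psi2_tmul, hfe, Module.Basis.repr_self,
      smul_eq_mul, Fintype.sum_prod_type, Finsupp.single_apply] using h0
  have : η = ∑ p, (e.tensorProduct e).repr η p • (e.tensorProduct e) p :=
    (Module.Basis.sum_repr _ η).symm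
  rw [this]
  simp [hrep]

/-- Nondegeneracy of the `B`-valued pairing. -/
lemma psiOne_sep (hψ : IsState ψ) (η₁ η₂ : B ⊗[ℂ] B)
    (h : ∀ ξ : B ⊗[ℂ] B, psiOne ψ (starT ξ * η₁) = psiOne ψ (starT ξ * η₂)) : η₁ = η₂ := by
  have : ∀ ζ : B ⊗[ℂ] B, psi2 ψ (ζ * (η₁ - η₂)) = 0 := by
    intro ζ
    have h' := h (starT ζ)
    rw [starT_starT] at h'
    rw [mul_sub, map_sub, ← psi_psiOne, ← psi_psiOne, h', sub_self]
  have := psi2_sep ψ hψ _ this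
  exact sub_eq_zero.mp this

lemma mstar_left (hψ : IsState ψ) (hadj : IsAdjointMul ψ mstar) (x : B) :
    mstar x = (x ⊗ₜ[ℂ] (1 : B)) * mstar 1 := by
  refine psiOne_sep ψ hψ _ _ fun ξ => ?_
  have h1 : starT ξ * (x ⊗ₜ[ℂ] (1 : B)) = starT ((star x ⊗ₜ[ℂ] (1 : B)) * ξ) := by
    rw [starT_tmul_one_mul, star_star]
  rw [bip_mstar ψ mstar hψ hadj, ← mul_assoc, h1, bip_mstar ψ mstar hψ hadj,
    mulMap_tmul_one_mul, star_mul, star_star, mul_one]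

lemma mstar_right (hψ : IsState ψ) (hadj : IsAdjointMul ψ mstar) (x : B) :
    mstar x = mstar 1 * ((1 : B) ⊗ₜ[ℂ] x) := by
  refine psiOne_sep ψ hψ _ _ fun ξ => ?_
  rw [bip_mstar ψ mstar hψ hadj, ← mul_assoc, psiOne_mul_one_tmul,
    bip_mstar ψ mstar hψ hadj, mul_one]

variable (α : B →ₗ[ℂ] B)

lemma lTensor_mul_one_tmul (hmul : ∀ x y, α (x * y) = α x * α y) (x : B) (ζ : B ⊗[ℂ] B) :
    LinearMap.lTensor B α (ζ * ((1 : B) ⊗ₜ[ℂ] x)) =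
      LinearMap.lTensor B α ζ * ((1 : B) ⊗ₜ[ℂ] α x) := by
  induction ζ using TensorProduct.induction_on with
  | zero => simp
  | tmul u v => simp [Algebra.TensorProduct.tmul_mul_tmul, hmul]
  | add a b ha hb => simp only [add_mul, map_add, ha, hb]

lemma lTensor_tmul_one_mul (x : B) (ζ : B ⊗[ℂ] B) :
    LinearMap.lTensor B α ((x ⊗ₜ[ℂ] (1 : B)) * ζ) =
      (x ⊗ₜ[ℂ] (1 : B)) * LinearMap.lTensor B α ζ := by
  induction ζ using TensorProduct.induction_on with
  | zero => simp
  | tmul u v => simp [Algebra.TensorProduct.tmul_mul_tmul]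
  | add a b ha hb => simp only [mul_add, map_add, ha, hb]

lemma lTensor_mul (hmul : ∀ x y, α (x * y) = α x * α y) (ζ η : B ⊗[ℂ] B) :
    LinearMap.lTensor B α ζ * LinearMap.lTensor B α η = LinearMap.lTensor B α (ζ * η) := by
  induction ζ using TensorProduct.induction_on with
  | zero => simp
  | tmul u v =>
      induction η using TensorProduct.induction_on with
      | zero => simp
      | tmul u' v' => simp [Algebra.TensorProduct.tmul_mul_tmul, hmul]
      | add a b ha hb => simp only [mul_add, map_add, ha, hb]
  | add a b ha hb => simp only [add_mul, map_add, ha, hb]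

lemma starT_lTensor (hstar : ∀ x, α (star x) = star (α x)) (ζ : B ⊗[ℂ] B) :
    starT (LinearMap.lTensor B α ζ) = LinearMap.lTensor B α (starT ζ) := by
  induction ζ using TensorProduct.induction_on with
  | zero => simp [starT_zero]
  | tmul u v => rw [LinearMap.lTensor_tmul, starT_tmul, starT_tmul, LinearMap.lTensor_tmul, hstar]
  | add a b ha hb => rw [map_add, starT_add, starT_add, map_add, ha, hb]

lemma psiOne_lTensor (ζ : B ⊗[ℂ] B) :
    psiOne ψ (LinearMap.lTensor B α ζ) = α (psiOne ψ ζ) := by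
  induction ζ using TensorProduct.induction_on with
  | zero => simp
  | tmul u v => simp [psiOne_tmul]
  | add a b ha hb => simp only [map_add, ha, hb]

end AuxLemmas

/-- For a `*`-automorphism `α`, the quantum edge correspondence `E_α` is isomorphic to `B_α`:
there is an injective linear map `Φ : B → B ⊗ B` with range `E_α`, sending `(1/δ)·1` to `ε_α`,
intertwining the `B_α`-bimodule actions (`x · η · y = α(x) η y` on `B_α`) and preserving the
`B`-valued inner products (`⟨a,b⟩ = a* b` on `B_α`). -/
theorem stmt_19 {B : Type*} [Ring B] [StarRing B] [Algebra ℂ B] [StarModule ℂ B]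
    [Module.Finite ℂ B] [Module.Free ℂ B]
    (ψ : B →ₗ[ℂ] ℂ) (hψ : IsState ψ)
    (mstar : B →ₗ[ℂ] B ⊗[ℂ] B) (hadj : IsAdjointMul ψ mstar)
    (δ : ℝ) (hδ : 0 < δ) (hdelta : IsDeltaForm mstar δ)
    (α : B →ₗ[ℂ] B) (hmul : ∀ x y, α (x * y) = α x * α y) (hone : α 1 = 1)
    (hstar : ∀ x, α (star x) = star (α x)) (hbij : Function.Bijective α) :
    ∃ Φ : B →ₗ[ℂ] B ⊗[ℂ] B,
      Function.Injective Φ ∧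
      LinearMap.range Φ = EGspan mstar δ α ∧
      Φ (((δ : ℂ))⁻¹ • 1) = edgeInd mstar δ α ∧
      (∀ x η y : B, Φ (α x * η * y) = (x ⊗ₜ[ℂ] (1 : B)) * Φ η * ((1 : B) ⊗ₜ[ℂ] y)) ∧
      (∀ a b : B, bip ψ (Φ a) (Φ b) = star a * b) := by
  classical
  have hδ0 : (δ : ℂ) ≠ 0 := Complex.ofReal_ne_zero.mpr (ne_of_gt hδ)
  have hδ20 : ((δ : ℂ)^2) ≠ 0 := pow_ne_zero 2 hδ0
  set ε : B ⊗[ℂ] B := edgeInd mstar δ α with hεdef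
  have hε : ε = ((δ : ℂ)^2)⁻¹ • LinearMap.lTensor B α (mstar 1) := rfl
  -- Key commutation relation: (x ⊗ 1) ε = ε (1 ⊗ α x)
  have key1 : ∀ x : B, (x ⊗ₜ[ℂ] (1:B)) * ε = ε * ((1:B) ⊗ₜ[ℂ] α x) := by
    intro x
    rw [hε, mul_smul_comm, smul_mul_assoc, ← lTensor_tmul_one_mul α,
      ← mstar_left ψ mstar hψ hadj, mstar_right ψ mstar hψ hadj,
      lTensor_mul_one_tmul α hmul]
  -- ⟨m*(1), m*(1)⟩_B = δ² 1
  have hstardelta : star ((δ:ℂ)^2) = (δ:ℂ)^2 := by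
    rw [star_pow, Complex.star_def, Complex.conj_ofReal]
  have L3 : psiOne ψ (starT (mstar 1) * mstar 1) = ((δ:ℂ)^2) • (1:B) := by
    rw [bip_mstar ψ mstar hψ hadj, hdelta 1, mul_one, star_smul, star_one, hstardelta]
  -- starT ε
  have hstarε : starT ε = ((δ : ℂ)^2)⁻¹ • LinearMap.lTensor B α (starT (mstar 1)) := by
    rw [hε, starT_smul, map_inv₀, map_pow, Complex.conj_ofReal, starT_lTensor α hstar]
  -- ⟨ε, ε⟩_B = δ⁻² 1
  have key2 : psiOne ψ (starT ε * ε) = ((δ : ℂ)^2)⁻¹ • (1:B) := by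
    rw [hstarε, hε, smul_mul_assoc, mul_smul_comm, smul_smul, lTensor_mul α hmul,
      map_smul, psiOne_lTensor ψ α, L3, map_smul, hone, smul_smul]
    congr 1
    field_simp
  -- the isomorphism Φ
  set Φ : B →ₗ[ℂ] B ⊗[ℂ] B := (δ:ℂ) • (LinearMap.mulLeft ℂ ε ∘ₗ
    (Algebra.TensorProduct.includeRight (R := ℂ) (A := B) (B := B)).toLinearMap) with hΦdef
  have hΦ : ∀ b : B, Φ b = (δ:ℂ) • (ε * ((1:B) ⊗ₜ[ℂ] b)) := fun b => by
    rw [hΦdef]; simp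
  -- inner products
  have hip : ∀ a b : B, bip ψ (Φ a) (Φ b) = star a * b := by
    intro a b
    have h1 : starT (Φ a) = (δ:ℂ) • (((1:B) ⊗ₜ[ℂ] star a) * starT ε) := by
      rw [hΦ, starT_smul, Complex.conj_ofReal, starT_mul_one_tmul]
    show psiOne ψ (starT (Φ a) * Φ b) = star a * b
    rw [h1, hΦ, smul_mul_assoc, mul_smul_comm, smul_smul,
      mul_assoc ((1:B) ⊗ₜ[ℂ] star a), ← mul_assoc (starT ε), map_smul,
      psiOne_one_tmul_mul, psiOne_mul_one_tmul, key2, smul_mul_assoc, one_mul,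
      mul_smul_comm, smul_smul]
    have : (δ:ℂ) * (δ:ℂ) * ((δ:ℂ)^2)⁻¹ = 1 := by
      rw [← sq]
      exact mul_inv_cancel₀ hδ20
    rw [this, one_smul]
  refine ⟨Φ, ?_, ?_, ?_, ?_, hip⟩
  · -- injectivity
    intro a a' h
    have h0 : star (a - a') * (a - a') = 0 := by
      have h1 := hip (a - a') (a - a')
      have h2 : Φ (a - a') = 0 := by rw [map_sub, h, sub_self]
      rw [← h1]
      show psiOne ψ (starT (Φ (a - a')) * Φ (a - a')) = 0
      rw [h2, starT_zero, zero_mul, map_zero]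
    have h3 : ψ (star (a - a') * (a - a')) = 0 := by rw [h0, map_zero]
    exact sub_eq_zero.mp (hψ.2.2 _ h3)
  · -- range
    apply le_antisymm
    · rintro z ⟨b, rfl⟩
      have hz : Φ b = (δ:ℂ) • ((1 ⊗ₜ[ℂ] (1:B)) * ε * ((1:B) ⊗ₜ[ℂ] b)) := by
        rw [hΦ, ← Algebra.TensorProduct.one_def, one_mul]
      rw [hz]
      exact Submodule.smul_mem _ _ (Submodule.subset_span ⟨1, b, rfl⟩)
    · rw [EGspan, Submodule.span_le]
      rintro z ⟨x, y, rfl⟩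
      refine ⟨(δ:ℂ)⁻¹ • (α x * y), ?_⟩
      rw [map_smul, hΦ, smul_smul, inv_mul_cancel₀ hδ0, one_smul]
      have e1 : (1:B) ⊗ₜ[ℂ] (α x * y) = ((1:B) ⊗ₜ[ℂ] α x) * ((1:B) ⊗ₜ[ℂ] y) := by
        rw [Algebra.TensorProduct.tmul_mul_tmul, one_mul]
      rw [e1, ← mul_assoc, ← key1]
  · -- image of the cyclic vector
    rw [map_smul, hΦ, smul_smul, inv_mul_cancel₀ hδ0, one_smul,
      ← Algebra.TensorProduct.one_def, mul_one]
  · -- bimodule property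
    intro x η y
    rw [hΦ, hΦ, mul_smul_comm, smul_mul_assoc]
    congr 1
    have e1 : (1:B) ⊗ₜ[ℂ] (α x * η * y) =
        ((1:B) ⊗ₜ[ℂ] α x) * ((1:B) ⊗ₜ[ℂ] η) * ((1:B) ⊗ₜ[ℂ] y) := by
      simp [Algebra.TensorProduct.tmul_mul_tmul]
    rw [e1, ← mul_assoc, ← mul_assoc, ← key1, mul_assoc (x ⊗ₜ[ℂ] (1:B)) ε]

end
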